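/- arXiv:2211.00079 — 2 statements merged into one kernel-verified Lean document; each statement's English description precedes it below -/
import Mathlib

section
/- Under the hypotheses of the previous setup (A, H, x_H differentiable with z^α ∂_{x^i}A_α(x_H(z)) + ∂_{x^i}H(x_H(z)) = 0 for all z), if z₀ is a critical point of S_H(z) = z^α A_α(x_H(z)) + H(x_H(z)), then x_H(z₀) is a solution of the system A(x) = 0. -/
theorem stmt1 (n N : ℕ)
    (A : EuclideanSpace ℝ (Fin n) → EuclideanSpace ℝ (Fin N))
    (H : EuclideanSpace ℝ (Fin n) → ℝ)
    (xH : EuclideanSpace ℝ (Fin N) → EuclideanSpace ℝ (Fin n))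
    (hA : Differentiable ℝ A) (hH : Differentiable ℝ H)
    (hxH : Differentiable ℝ xH)
    (hstat : ∀ z v, (∑ α, z α * fderiv ℝ A (xH z) v α) + fderiv ℝ H (xH z) v = 0)
    (z₀ : EuclideanSpace ℝ (Fin N))
    (hcrit : fderiv ℝ (fun z => (∑ α, z α * A (xH z) α) + H (xH z)) z₀ = 0) :
    A (xH z₀) = 0 := by
  set D := fderiv ℝ xH z₀ with hDdef
  set L := fderiv ℝ A (xH z₀) with hLdef
  set M := fderiv ℝ H (xH z₀) with hMdef
  have hD : HasFDerivAt xH D z₀ := (hxH z₀).hasFDerivAt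
  have hAx : HasFDerivAt (fun z => A (xH z)) (L.comp D) z₀ :=
    ((hA (xH z₀)).hasFDerivAt).comp z₀ hD
  have hHx : HasFDerivAt (fun z => H (xH z)) (M.comp D) z₀ :=
    ((hH (xH z₀)).hasFDerivAt).comp z₀ hD
  have hmul : ∀ α : Fin N, HasFDerivAt (fun z : EuclideanSpace ℝ (Fin N) => z α * A (xH z) α)
      (z₀ α • ((EuclideanSpace.proj α).comp (L.comp D)) + A (xH z₀) α • (EuclideanSpace.proj α : EuclideanSpace ℝ (Fin N) →L[ℝ] ℝ)) z₀ := by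
    intro α
    have h1 : HasFDerivAt (fun z : EuclideanSpace ℝ (Fin N) => z α)
        (EuclideanSpace.proj α : EuclideanSpace ℝ (Fin N) →L[ℝ] ℝ) z₀ :=
      (EuclideanSpace.proj α : EuclideanSpace ℝ (Fin N) →L[ℝ] ℝ).hasFDerivAt
    have h2 : HasFDerivAt (fun z => A (xH z) α)
        ((EuclideanSpace.proj α).comp (L.comp D)) z₀ :=
      ((EuclideanSpace.proj (𝕜 := ℝ) α).hasFDerivAt).comp z₀ hAx
    exact h1.mul h2
  have hsum : HasFDerivAt (fun z : EuclideanSpace ℝ (Fin N) => ∑ α, z α * A (xH z) α)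
      (∑ α, (z₀ α • ((EuclideanSpace.proj α).comp (L.comp D)) + A (xH z₀) α • (EuclideanSpace.proj α : EuclideanSpace ℝ (Fin N) →L[ℝ] ℝ))) z₀ :=
    HasFDerivAt.fun_sum (fun α _ => hmul α)
  have htot := hsum.fun_add hHx
  have h0 := htot.fderiv
  rw [hcrit] at h0
  have key : ∀ w : EuclideanSpace ℝ (Fin N),
      (∑ α, (z₀ α * (L (D w)) α + A (xH z₀) α * w α)) + M (D w) = 0 := by
    intro w
    have := DFunLike.congr_fun h0.symm w
    simpa [ContinuousLinearMap.sum_apply, Finset.sum_add_distrib, mul_comm] using this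
  have key2 : ∀ w : EuclideanSpace ℝ (Fin N), (∑ α, A (xH z₀) α * w α) = 0 := by
    intro w
    have h1 := key w
    have h2 := hstat z₀ (D w)
    rw [← hLdef, ← hMdef] at h2
    have := Finset.sum_add_distrib (s := (Finset.univ : Finset (Fin N)))
      (f := fun α => z₀ α * (L (D w)) α) (g := fun α => A (xH z₀) α * w α)
    linarith [h1, h2, this ▸ h1]
  ext β
  have := key2 (EuclideanSpace.single β 1)
  simpa [EuclideanSpace.single_apply, Finset.sum_ite_eq'] using this
end

section
/- Suppose the system A(x) = 0 has a unique solution y ∈ ℝⁿ. Then for any admissible potential H (i.e., any differentiable H for which a differentiable map x_H exists satisfying the stationarity identity), and any critical point z₀ of the associated dual objective S_H, one has x_H(z₀) = y. -/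
theorem stmt2 (n N : ℕ)
    (A : EuclideanSpace ℝ (Fin n) → EuclideanSpace ℝ (Fin N))
    (hA : Differentiable ℝ A)
    (y : EuclideanSpace ℝ (Fin n))
    (hy : A y = 0) (huniq : ∀ x, A x = 0 → x = y) :
    ∀ (H : EuclideanSpace ℝ (Fin n) → ℝ)
      (xH : EuclideanSpace ℝ (Fin N) → EuclideanSpace ℝ (Fin n)),
      Differentiable ℝ H → Differentiable ℝ xH →
      (∀ z v, (∑ α, z α * fderiv ℝ A (xH z) v α) + fderiv ℝ H (xH z) v = 0) →
      ∀ z₀ : EuclideanSpace ℝ (Fin N),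
        fderiv ℝ (fun z => (∑ α, z α * A (xH z) α) + H (xH z)) z₀ = 0 →
        xH z₀ = y := by
  intro H xH hH hxH hstat z₀ hcrit
  let P : Fin N → (EuclideanSpace ℝ (Fin N) →L[ℝ] ℝ) := fun α => EuclideanSpace.proj α
  let Q : Fin n → (EuclideanSpace ℝ (Fin n) →L[ℝ] ℝ) := fun i => EuclideanSpace.proj i
  have hD : HasFDerivAt xH (fderiv ℝ xH z₀) z₀ := (hxH z₀).hasFDerivAt
  have hAx : HasFDerivAt (fun z => A (xH z))
      ((fderiv ℝ A (xH z₀)).comp (fderiv ℝ xH z₀)) z₀ :=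
    ((hA (xH z₀)).hasFDerivAt).comp z₀ hD
  have hterm : ∀ α : Fin N, HasFDerivAt (fun z => z α * A (xH z) α)
      (z₀ α • ((P α).comp
          ((fderiv ℝ A (xH z₀)).comp (fderiv ℝ xH z₀)))
        + A (xH z₀) α • (P α)) z₀ := by
    intro α
    have h1 : HasFDerivAt (fun z : EuclideanSpace ℝ (Fin N) => z α)
        (P α) z₀ := (P α).hasFDerivAt
    have h2 : HasFDerivAt (fun z => A (xH z) α)
        ((P α).comp
          ((fderiv ℝ A (xH z₀)).comp (fderiv ℝ xH z₀))) z₀ :=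
      ((P α).hasFDerivAt).comp z₀ hAx
    exact h1.mul h2
  have hHx : HasFDerivAt (fun z => H (xH z))
      ((fderiv ℝ H (xH z₀)).comp (fderiv ℝ xH z₀)) z₀ :=
    ((hH (xH z₀)).hasFDerivAt).comp z₀ hD
  have htot : HasFDerivAt (fun z => (∑ α, z α * A (xH z) α) + H (xH z))
      ((∑ α, (z₀ α • ((P α).comp
          ((fderiv ℝ A (xH z₀)).comp (fderiv ℝ xH z₀)))
        + A (xH z₀) α • (P α)))
        + (fderiv ℝ H (xH z₀)).comp (fderiv ℝ xH z₀)) z₀ :=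
    (HasFDerivAt.fun_sum (fun α _ => hterm α)).add hHx
  have hzero : ((∑ α, (z₀ α • ((P α).comp
          ((fderiv ℝ A (xH z₀)).comp (fderiv ℝ xH z₀)))
        + A (xH z₀) α • (P α)))
        + (fderiv ℝ H (xH z₀)).comp (fderiv ℝ xH z₀)) = 0 := by
    rw [← htot.fderiv]; exact hcrit
  apply huniq
  ext β
  have hev := congrArg (fun T : EuclideanSpace ℝ (Fin N) →L[ℝ] ℝ =>
    T (EuclideanSpace.single β 1)) hzero
  simp only [ContinuousLinearMap.add_apply, ContinuousLinearMap.coe_sum',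
    Finset.sum_apply, ContinuousLinearMap.smul_apply,
    ContinuousLinearMap.comp_apply, P, PiLp.proj_apply,
    ContinuousLinearMap.zero_apply, smul_eq_mul, Finset.sum_add_distrib] at hev
  have hs := hstat z₀ (fderiv ℝ xH z₀ (EuclideanSpace.single β 1))
  have : (∑ α, A (xH z₀) α * EuclideanSpace.single β (1:ℝ) α) = 0 := by
    linarith [hev, hs]
  simpa [EuclideanSpace.single_apply, Finset.sum_ite_eq'] using this
end
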